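/- For any non-negative integer t and any graph G, every rank-t perturbation of G is a t-perturbation of G. -/

import Mathlib

namespace EP

variable {V W : Type}

/-- Local complementation of `G` at `v`: complement the adjacency between
every pair of distinct neighbours of `v`. -/
def localComp (G : SimpleGraph V) (v : V) : SimpleGraph V where
  Adj x y := x ≠ y ∧
    ((G.Adj v x ∧ G.Adj v y ∧ ¬ G.Adj x y) ∨ (¬(G.Adj v x ∧ G.Adj v y) ∧ G.Adj x y))
  symm := by
    constructor
    intro x y h
    obtain ⟨hxy, h⟩ := h
    refine ⟨hxy.symm, ?_⟩
    rcases h with ⟨h1, h2, h3⟩ | ⟨h1, h2⟩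
    · exact Or.inl ⟨h2, h1, fun h => h3 h.symm⟩
    · exact Or.inr ⟨fun h => h1 ⟨h.2, h.1⟩, h2.symm⟩
  loopless := ⟨fun x h => h.1 rfl⟩

/-- Two graphs on the same vertex set are locally equivalent if one is obtained from
the other by a sequence of local complementations. -/
def LocEquiv (G G' : SimpleGraph V) : Prop :=
  Relation.ReflTransGen (fun A B => ∃ v, B = localComp A v) G G'

/-- `H` is a vertex-minor of `G`, located at the embedding `f`: some graph locally
equivalent to `G` induces a copy of `H` on the image of `f` (equivalently, `H` is
obtained from `G` by a sequence of local complementations and vertex deletions,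
with `f` recording the surviving vertices). -/
def IsVertexMinorAt (G : SimpleGraph V) (H : SimpleGraph W) (f : W ↪ V) : Prop :=
  ∃ G' : SimpleGraph V, LocEquiv G G' ∧ ∀ x y, H.Adj x y ↔ G'.Adj (f x) (f y)

/-- `G` has a vertex-minor isomorphic to `H`. -/
def HasVertexMinor (G : SimpleGraph V) (H : SimpleGraph W) : Prop :=
  ∃ f : W ↪ V, IsVertexMinorAt G H f

/-- `G₁` is a `t`-perturbation of `G₂`: they have the same vertex set `V`, and some
graph on `|V| + t` vertices contains both of them as vertex-minors (on `V`). -/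
def IsPerturbation (t : ℕ) (G₁ G₂ : SimpleGraph V) : Prop :=
  ∃ Gbig : SimpleGraph (V ⊕ Fin t),
    IsVertexMinorAt Gbig G₁ ⟨Sum.inl, Sum.inl_injective⟩ ∧
    IsVertexMinorAt Gbig G₂ ⟨Sum.inl, Sum.inl_injective⟩

/-- The disjoint union of `k` copies of `H`. -/
def copies (k : ℕ) (H : SimpleGraph W) : SimpleGraph (Fin k × W) where
  Adj x y := x.1 = y.1 ∧ H.Adj x.2 y.2
  symm := ⟨fun _ _ h => ⟨h.1.symm, h.2.symm⟩⟩
  loopless := ⟨fun x h => H.irrefl h.2⟩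

/-- `G` is a circle graph: its vertices can be assigned chords of a circle
(encoded by pairs of distinct endpoints, all `2|V|` endpoints being distinct) so that
two distinct vertices are adjacent iff their chords cross, i.e. exactly one endpoint
of one chord lies strictly between the two endpoints of the other. -/
def IsCircleGraph (G : SimpleGraph V) : Prop :=
  ∃ a b : V → ℝ,
    (∀ u v, a u = a v → u = v) ∧ (∀ u v, b u = b v → u = v) ∧ (∀ u v, a u ≠ b v) ∧
    ∀ u v, G.Adj u v ↔ u ≠ v ∧
      ¬((min (a u) (b u) < a v ∧ a v < max (a u) (b u)) ↔
        (min (a u) (b u) < b v ∧ b v < max (a u) (b u)))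

/-- `G` is `t`-robust for `H` if every `t`-perturbation of `G` has a vertex-minor
isomorphic to `H`. -/
def Robust (t : ℕ) (G : SimpleGraph V) (H : SimpleGraph W) : Prop :=
  ∀ G' : SimpleGraph V, IsPerturbation t G' G → HasVertexMinor G' H

open Classical in
/-- The cut-rank of `X` in `G`: the rank over `GF(2)` of the `X × Xᶜ` submatrix of the
adjacency matrix of `G`. -/
noncomputable def cutRank [Fintype V] (G : SimpleGraph V) (X : Set V) : ℕ :=
  (Matrix.of fun (x : X) (y : ↥Xᶜ) => if G.Adj x.1 y.1 then (1 : ZMod 2) else 0).rank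

/-- The graph obtained from `G` by deleting all edges with exactly one end in `X`. -/
def cutDelete (G : SimpleGraph V) (X : Set V) : SimpleGraph V where
  Adj x y := G.Adj x y ∧ (x ∈ X ↔ y ∈ X)
  symm := ⟨fun _ _ h => ⟨h.1.symm, h.2.symm⟩⟩
  loopless := ⟨fun x h => G.irrefl h.1⟩

open Classical in
/-- The adjacency matrix of `G` over `GF(2)`. -/
noncomputable def adjMat (G : SimpleGraph V) : Matrix V V (ZMod 2) :=
  Matrix.of fun x y => if G.Adj x y then 1 else 0

/-- `G₁` is a rank-`t` perturbation of `G₂`: the adjacency matrix of `G₁` is obtained from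
that of `G₂` by adding a matrix of rank at most `t` over `GF(2)` and then zeroing out the
diagonal. -/
def IsRankPerturbation [Fintype V] (t : ℕ) (G₁ G₂ : SimpleGraph V) : Prop :=
  ∃ M : Matrix V V (ZMod 2), M.rank ≤ t ∧
    ∀ x y : V, x ≠ y → adjMat G₁ x y = adjMat G₂ x y + M x y


section
variable {V : Type} [Fintype V]

inductive Term (V : Type) where
  | clique (c : V → ZMod 2)
  | pivot (a b : V → ZMod 2)

def Term.cost : Term V → ℕ
  | .clique _ => 1
  | .pivot _ _ => 2

def Term.mat : Term V → Matrix V V (ZMod 2)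
  | .clique c => Matrix.vecMulVec c c
  | .pivot a b => Matrix.vecMulVec a b + Matrix.vecMulVec b a

open Matrix in
lemma ker_lt_aux (M M' : Matrix V V (ZMod 2))
    (hle : LinearMap.ker M.mulVecLin ≤ LinearMap.ker M'.mulVecLin)
    (v : V → ZMod 2) (hv : M'.mulVec v = 0) (hnv : M.mulVec v ≠ 0) :
    M'.rank + 1 ≤ M.rank := by
  classical
  have hlt : LinearMap.ker M.mulVecLin < LinearMap.ker M'.mulVecLin := by
    refine lt_of_le_of_ne hle (fun h => hnv ?_)
    have : v ∈ LinearMap.ker M'.mulVecLin := hv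
    rw [← h] at this
    exact this
  have h1 : Module.finrank (ZMod 2) (LinearMap.ker M.mulVecLin) <
      Module.finrank (ZMod 2) (LinearMap.ker M'.mulVecLin) :=
    Submodule.finrank_lt_finrank_of_lt hlt
  have h2 := LinearMap.finrank_range_add_finrank_ker M.mulVecLin
  have h3 := LinearMap.finrank_range_add_finrank_ker M'.mulVecLin
  unfold Matrix.rank
  omega

end

section
variable {V : Type} [Fintype V]
open Matrix

lemma ker_lt2_aux (M M' : Matrix V V (ZMod 2))
    (hle : LinearMap.ker M.mulVecLin ≤ LinearMap.ker M'.mulVecLin)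
    (v w : V → ZMod 2) (hv : M'.mulVec v = 0) (hw : M'.mulVec w = 0)
    (hnv : M.mulVec v ≠ 0)
    (hnw : w ∉ LinearMap.ker M.mulVecLin ⊔ Submodule.span (ZMod 2) {v}) :
    M'.rank + 2 ≤ M.rank := by
  classical
  have hK1 : LinearMap.ker M.mulVecLin < LinearMap.ker M.mulVecLin ⊔ Submodule.span (ZMod 2) {v} := by
    refine lt_of_le_of_ne le_sup_left (fun h => hnv ?_)
    have : v ∈ LinearMap.ker M.mulVecLin ⊔ Submodule.span (ZMod 2) {v} :=
      le_sup_right (α := Submodule (ZMod 2) (V → ZMod 2)) |>.trans_eq rfl |> (fun hh => hh (Submodule.mem_span_singleton_self v))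
    rw [← h] at this
    exact this
  have hK2 : LinearMap.ker M.mulVecLin ⊔ Submodule.span (ZMod 2) {v} <
      LinearMap.ker M'.mulVecLin := by
    refine lt_of_le_of_ne (sup_le hle ?_) (fun h => hnw ?_)
    · rw [Submodule.span_le, Set.singleton_subset_iff]; exact hv
    · rw [h]; exact hw
  have h1 := Submodule.finrank_lt_finrank_of_lt hK1
  have h1' := Submodule.finrank_lt_finrank_of_lt hK2
  have h2 := LinearMap.finrank_range_add_finrank_ker M.mulVecLin
  have h3 := LinearMap.finrank_range_add_finrank_ker M'.mulVecLin
  unfold Matrix.rank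
  omega

end

section
variable {V : Type} [Fintype V]
open Matrix

lemma vecMulVec_mulVec (c d v : V → ZMod 2) :
    (Matrix.vecMulVec c d).mulVec v = (d ⬝ᵥ v) • c := by
  ext i
  simp [Matrix.mulVec, Matrix.vecMulVec, dotProduct, Finset.mul_sum, Finset.sum_mul,
    mul_comm, mul_assoc, mul_left_comm]

omit [Fintype V] in
lemma zmod2_cases (z : ZMod 2) : z = 0 ∨ z = 1 := by revert z; decide

lemma matrix_add_self (A : Matrix V V (ZMod 2)) : A + A = 0 := by
  ext i j
  have := zmod2_cases (A i j)
  rcases this with h | h <;> simp [h]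
  · rfl

lemma decomp_exists : ∀ (t : ℕ) (M : Matrix V V (ZMod 2)), (∀ x y, M x y = M y x) →
    M.rank ≤ t → ∃ L : List (Term V), ((L.map Term.cost).sum ≤ t ∧ (L.map Term.mat).sum = M) := by
  classical
  intro t
  induction t using Nat.strong_induction_on with
  | _ t IH =>
    intro M hsym hrk
    by_cases hM : M = 0
    · exact ⟨[], by simp [hM]⟩
    -- pick a nonzero entry
    have hx : ∃ x y, M x y = 1 := by
      by_contra h
      push_neg at h
      apply hM
      ext x y
      rcases zmod2_cases (M x y) with h0 | h1
      · simp [h0]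
      · exact absurd h1 (h x y)
    by_cases hdiag : ∃ x, M x x = 1
    · -- clique step
      obtain ⟨x, hxx⟩ := hdiag
      set c : V → ZMod 2 := fun i => M i x with hc
      set M' : Matrix V V (ZMod 2) := M + Matrix.vecMulVec c c with hM'
      have hcol : M.mulVec (Pi.single x 1) = c := by
        rw [Matrix.mulVec_single]
        ext i; simp [hc, Matrix.col]
      have hdot : ∀ v, M.mulVec v = 0 → c ⬝ᵥ v = 0 := by
        intro v hv
        have : c ⬝ᵥ v = (M.mulVec v) x := by
          simp [dotProduct, Matrix.mulVec, hc, mul_comm]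
          congr 1; ext i; rw [hsym x i]
        rw [this, hv]; rfl
      have hker : LinearMap.ker M.mulVecLin ≤ LinearMap.ker M'.mulVecLin := by
        intro v hv
        have hv' : M.mulVec v = 0 := hv
        have : M'.mulVec v = M.mulVec v + (Matrix.vecMulVec c c).mulVec v := by
          simp [hM', Matrix.add_mulVec]
        simp only [LinearMap.mem_ker, Matrix.mulVecLin_apply]
        rw [this, hv', vecMulVec_mulVec, hdot v hv', zero_smul, zero_add]
      have hvker : M'.mulVec (Pi.single x 1) = 0 := by
        rw [hM', Matrix.add_mulVec, hcol, vecMulVec_mulVec]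
        have : c ⬝ᵥ Pi.single x 1 = c x := by
          simp [dotProduct, Pi.single_apply, mul_ite]
        rw [this]
        have hcx : c x = 1 := hxx
        rw [hcx, one_smul]
        ext i; simp [CharTwo.add_self_eq_zero]
      have hvnk : M.mulVec (Pi.single x 1) ≠ 0 := by
        rw [hcol]
        intro h
        have h2 : c x = 0 := by rw [h]; rfl
        have h3 : c x = 1 := hxx
        rw [h2] at h3; exact one_ne_zero h3.symm
      have hrank : M'.rank + 1 ≤ M.rank := ker_lt_aux M M' hker _ hvker hvnk
      have hsym' : ∀ a b, M' a b = M' b a := by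
        intro a b; simp [hM', Matrix.vecMulVec, hsym a b, mul_comm]
      have ht1 : 1 ≤ t := le_trans (by omega) hrk
      obtain ⟨L, hL1, hL2⟩ := IH (t - 1) (by omega) M' hsym' (by omega)
      refine ⟨Term.clique c :: L, ?_, ?_⟩
      · simp [Term.cost]; omega
      · simp only [List.map_cons, List.sum_cons, hL2, Term.mat, hM']
        rw [← add_assoc]
        rw [show Matrix.vecMulVec c c + M = M + Matrix.vecMulVec c c from add_comm _ _]
        rw [add_assoc, matrix_add_self, add_zero]
    · -- pivot step: all diagonal entries are zero
      push_neg at hdiag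
      have hdiag0 : ∀ x, M x x = 0 := by
        intro x
        rcases zmod2_cases (M x x) with h | h
        · exact h
        · exact absurd h (hdiag x)
      obtain ⟨x, y, hxy⟩ := hx
      have hxny : x ≠ y := by
        rintro rfl
        rw [hdiag0 x] at hxy
        exact one_ne_zero hxy.symm
      set a : V → ZMod 2 := fun i => M i x with ha
      set b : V → ZMod 2 := fun i => M i y with hb
      have hax : a x = 0 := hdiag0 x
      have hbx : b x = 1 := hxy
      have hay : a y = 1 := by rw [ha]; simp only []; rw [hsym y x]; exact hxy
      set X : Matrix V V (ZMod 2) := Matrix.vecMulVec a b + Matrix.vecMulVec b a with hX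
      set M' : Matrix V V (ZMod 2) := M + X with hM'
      have hcola : M.mulVec (Pi.single x 1) = a := by
        rw [Matrix.mulVec_single]; ext i; simp [ha]
      have hcolb : M.mulVec (Pi.single y 1) = b := by
        rw [Matrix.mulVec_single]; ext i; simp [hb]
      have hdot : ∀ (u : V) (v : V → ZMod 2), M.mulVec v = 0 → (fun i => M i u) ⬝ᵥ v = 0 := by
        intro u v hv
        have : (fun i => M i u) ⬝ᵥ v = (M.mulVec v) u := by
          simp [dotProduct, Matrix.mulVec, mul_comm]
          congr 1; ext i; rw [hsym u i]
        rw [this, hv]; rfl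
      have hXmul : ∀ v, X.mulVec v = (b ⬝ᵥ v) • a + (a ⬝ᵥ v) • b := by
        intro v
        rw [hX, Matrix.add_mulVec, vecMulVec_mulVec, vecMulVec_mulVec]
      have hker : LinearMap.ker M.mulVecLin ≤ LinearMap.ker M'.mulVecLin := by
        intro v hv
        have hv' : M.mulVec v = 0 := hv
        simp only [LinearMap.mem_ker, Matrix.mulVecLin_apply]
        rw [hM', Matrix.add_mulVec, hv', hXmul, hdot x v hv', hdot y v hv',
          zero_smul, zero_smul, add_zero, zero_add]
      have hdotsingle : ∀ (c : V → ZMod 2) (u : V), c ⬝ᵥ Pi.single u 1 = c u := by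
        intro c u; simp [dotProduct, Pi.single_apply, mul_ite]
      have hvkerx : M'.mulVec (Pi.single x 1) = 0 := by
        rw [hM', Matrix.add_mulVec, hcola, hXmul, hdotsingle, hdotsingle,
          hbx, hax, one_smul, zero_smul, add_zero]
        ext i; simp [CharTwo.add_self_eq_zero]
      have hby : b y = 0 := hdiag0 y
      have hvkery : M'.mulVec (Pi.single y 1) = 0 := by
        rw [hM', Matrix.add_mulVec, hcolb, hXmul, hdotsingle, hdotsingle,
          hby, hay, one_smul, zero_smul, zero_add]
        ext i; simp [CharTwo.add_self_eq_zero]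
      have hvnkx : M.mulVec (Pi.single x 1) ≠ 0 := by
        rw [hcola]
        intro h
        have h2 : a y = 0 := by rw [h]; rfl
        rw [hay] at h2
        exact one_ne_zero h2
      have hnwy : Pi.single y (1 : ZMod 2) ∉
          LinearMap.ker M.mulVecLin ⊔ Submodule.span (ZMod 2) {Pi.single x (1 : ZMod 2)} := by
        intro hmem
        rw [Submodule.mem_sup] at hmem
        obtain ⟨k, hk, z, hz, hkz⟩ := hmem
        rw [Submodule.mem_span_singleton] at hz
        obtain ⟨α, rfl⟩ := hz
        have hMk : M.mulVec k = 0 := hk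
        have : M.mulVec (Pi.single y 1) = α • M.mulVec (Pi.single x 1) := by
          rw [← hkz, Matrix.mulVec_add, hMk, zero_add, Matrix.mulVec_smul]
        rw [hcola, hcolb] at this
        have hx2 : b x = α * a x := by rw [this]; rfl
        rw [hbx, hax, mul_zero] at hx2
        exact one_ne_zero hx2
      have hrank : M'.rank + 2 ≤ M.rank :=
        ker_lt2_aux M M' hker _ _ hvkerx hvkery hvnkx hnwy
      have hsym' : ∀ u w, M' u w = M' u w := fun _ _ => rfl
      have hsym'' : ∀ u w, M' u w = M' w u := by
        intro u w
        simp [hM', hX, Matrix.vecMulVec, hsym u w]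
        ring
      have ht2 : 2 ≤ t := le_trans (by omega) hrk
      obtain ⟨L, hL1, hL2⟩ := IH (t - 2) (by omega) M' hsym'' (by omega)
      refine ⟨Term.pivot a b :: L, ?_, ?_⟩
      · simp [Term.cost]; omega
      · simp only [List.map_cons, List.sum_cons, hL2, Term.mat, hM', ← hX]
        rw [← add_assoc]
        rw [show X + M = M + X from add_comm _ _]
        rw [add_assoc, matrix_add_self, add_zero]

end

section
variable {V U : Type}

lemma localComp_adj (G : SimpleGraph U) (v x y : U) :
    (localComp G v).Adj x y ↔ x ≠ y ∧
      ((G.Adj v x ∧ G.Adj v y ∧ ¬ G.Adj x y) ∨ (¬(G.Adj v x ∧ G.Adj v y) ∧ G.Adj x y)) :=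
  Iff.rfl

lemma localComp_frame (G : SimpleGraph U) (v x y : U) (h : ¬ G.Adj v x) :
    ((localComp G v).Adj x y ↔ G.Adj x y) := by
  rw [localComp_adj]
  constructor
  · rintro ⟨_, ⟨h1, _, _⟩ | ⟨_, h2⟩⟩
    · exact absurd h1 h
    · exact h2
  · intro h2
    exact ⟨h2.ne, Or.inr ⟨fun hc => h hc.1, h2⟩⟩

lemma zmod2_cases' (z : ZMod 2) : z = 0 ∨ z = 1 := by revert z; decide

open Classical in
lemma ind_add (A B : Prop) (t : ZMod 2) (h : B ↔ ¬ (A ↔ t = 1)) :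
    (if B then (1 : ZMod 2) else 0) = (if A then (1 : ZMod 2) else 0) + t := by
  rcases zmod2_cases' t with ht | ht <;> subst ht <;> by_cases hA : A <;>
    by_cases hB : B <;> simp_all <;> tauto

open Classical in
/-- clique gadget step -/
lemma clique_step (H : SimpleGraph U) (ι : V → U) (hinj : Function.Injective ι)
    (p : U) (c : V → ZMod 2)
    (hspec : ∀ u, H.Adj p u ↔ ∃ x, u = ι x ∧ c x = 1) :
    (∀ x y : V, x ≠ y →
      (if (localComp H p).Adj (ι x) (ι y) then (1 : ZMod 2) else 0) =
        (if H.Adj (ι x) (ι y) then (1 : ZMod 2) else 0) + c x * c y) ∧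
    (∀ u w, ¬ H.Adj p u → ((localComp H p).Adj u w ↔ H.Adj u w)) := by
  constructor
  · intro x y hxy
    have hne : ι x ≠ ι y := fun h => hxy (hinj h)
    have hpu : H.Adj p (ι x) ↔ c x = 1 := by
      rw [hspec]
      constructor
      · rintro ⟨x', hx', hc⟩; rwa [hinj hx']
      · intro h; exact ⟨x, rfl, h⟩
    have hpw : H.Adj p (ι y) ↔ c y = 1 := by
      rw [hspec]
      constructor
      · rintro ⟨x', hx', hc⟩; rwa [hinj hx']
      · intro h; exact ⟨y, rfl, h⟩
    apply ind_add
    rcases zmod2_cases' (c x) with hcx | hcx <;> rcases zmod2_cases' (c y) with hcy | hcy <;>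
      by_cases hA : H.Adj (ι x) (ι y) <;>
      simp [localComp_adj, hne, hpu, hpw, hcx, hcy, hA] <;> tauto
  · intro u w h
    exact localComp_frame H p u w h

end


section
variable {V U : Type}

set_option maxHeartbeats 2000000 in
open Classical in
/-- pivot gadget step -/
lemma pivot_step (H : SimpleGraph U) (ι : V → U) (hinj : Function.Injective ι)
    (p q : U) (a b : V → ZMod 2) (hpq : p ≠ q)
    (hpr : p ∉ Set.range ι) (hqr : q ∉ Set.range ι)
    (hsp : ∀ u, H.Adj p u ↔ (u = q ∨ ∃ x, u = ι x ∧ b x = 1))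
    (hsq : ∀ u, H.Adj q u ↔ (u = p ∨ ∃ x, u = ι x ∧ a x = 1)) :
    (∀ x y : V, x ≠ y →
      (if (localComp (localComp (localComp H p) q) p).Adj (ι x) (ι y) then (1 : ZMod 2) else 0) =
        (if H.Adj (ι x) (ι y) then (1 : ZMod 2) else 0) + (a x * b y + a y * b x)) ∧
    (∀ u w, ¬ H.Adj p u → ¬ H.Adj q u → u ≠ p → u ≠ q →
      ((localComp (localComp (localComp H p) q) p).Adj u w ↔ H.Adj u w)) := by
  have hApq : H.Adj p q := (hsp q).mpr (Or.inl rfl)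
  have hAqp : H.Adj q p := (hsq p).mpr (Or.inl rfl)
  have hnpp : ¬ H.Adj p p := H.loopless.irrefl p
  have hnqq : ¬ H.Adj q q := H.loopless.irrefl q
  constructor
  · intro x y hxy
    have hne : ι x ≠ ι y := fun h => hxy (hinj h)
    have hxp : ι x ≠ p := fun h => hpr ⟨x, h⟩
    have hxq : ι x ≠ q := fun h => hqr ⟨x, h⟩
    have hyp : ι y ≠ p := fun h => hpr ⟨y, h⟩
    have hyq : ι y ≠ q := fun h => hqr ⟨y, h⟩
    have hpu : H.Adj p (ι x) ↔ b x = 1 := by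
      rw [hsp]
      constructor
      · rintro (h | ⟨x', hx', hc⟩)
        · exact absurd h hxq
        · rwa [hinj hx']
      · intro h
        exact Or.inr ⟨x, rfl, h⟩
    have hpw : H.Adj p (ι y) ↔ b y = 1 := by
      rw [hsp]
      constructor
      · rintro (h | ⟨x', hx', hc⟩)
        · exact absurd h hyq
        · rwa [hinj hx']
      · intro h; exact Or.inr ⟨y, rfl, h⟩
    have hqu : H.Adj q (ι x) ↔ a x = 1 := by
      rw [hsq]
      constructor
      · rintro (h | ⟨x', hx', hc⟩)
        · exact absurd h hxp
        · rwa [hinj hx']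
      · intro h; exact Or.inr ⟨x, rfl, h⟩
    have hqw : H.Adj q (ι y) ↔ a y = 1 := by
      rw [hsq]
      constructor
      · rintro (h | ⟨x', hx', hc⟩)
        · exact absurd h hyp
        · rwa [hinj hx']
      · intro h; exact Or.inr ⟨y, rfl, h⟩
    apply ind_add
    have hux : H.Adj (ι x) p ↔ b x = 1 := by rw [H.adj_comm]; exact hpu
    have huy : H.Adj (ι y) p ↔ b y = 1 := by rw [H.adj_comm]; exact hpw
    have hvx : H.Adj (ι x) q ↔ a x = 1 := by rw [H.adj_comm]; exact hqu
    have hvy : H.Adj (ι y) q ↔ a y = 1 := by rw [H.adj_comm]; exact hqw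
    simp only [localComp_adj, hpu, hpw, hqu, hqw, hux, huy, hvx, hvy,
      hApq, hAqp, hnpp, hnqq, hne, hne.symm, hxp, hxq, hyp, hyq, hpq,
      Ne.symm hxp, Ne.symm hxq, Ne.symm hyp, Ne.symm hyq, Ne.symm hpq,
      ne_eq, not_false_iff, true_and, and_true, false_and, and_false, not_true, not_false_eq_true,
      iff_true, iff_false, true_or, or_true, false_or, or_false]
    rcases zmod2_cases' (a x) with hax | hax <;> rcases zmod2_cases' (a y) with hay | hay <;>
      rcases zmod2_cases' (b x) with hbx | hbx <;> rcases zmod2_cases' (b y) with hby | hby <;>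
      rw [hax, hay, hbx, hby] <;>
      by_cases hA : H.Adj (ι x) (ι y) <;>
      simp [hA, H.adj_comm (ι y) (ι x)] <;> tauto
  · intro u w hpu' hqu' hup huq
    have h1 := localComp_frame H p u w hpu'
    have h1q : ¬ (localComp H p).Adj q u := by
      rw [(localComp H p).adj_comm, localComp_frame H p u q hpu']
      intro h; exact hqu' h.symm
    have h2 := localComp_frame (localComp H p) q u w h1q
    have h2p : ¬ (localComp (localComp H p) q).Adj p u := by
      rw [(localComp (localComp H p) q).adj_comm, localComp_frame _ q u p h1q,
        localComp_frame H p u p hpu']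
      intro h; exact hpu' h.symm
    have h3 := localComp_frame (localComp (localComp H p) q) p u w h2p
    rw [h3, h2, h1]

end


section
variable {V U : Type}

inductive PG (V U : Type) where
  | clique (p : U) (c : V → ZMod 2)
  | pivot (p q : U) (a b : V → ZMod 2)

def PG.verts : PG V U → List U
  | .clique p _ => [p]
  | .pivot p q _ _ => [p, q]

def PG.tog : PG V U → V → V → ZMod 2
  | .clique _ c => fun x y => c x * c y
  | .pivot _ _ a b => fun x y => a x * b y + a y * b x

def PG.okverts : PG V U → Prop
  | .clique _ _ => True
  | .pivot p q _ _ => p ≠ q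

def spec (ι : V → U) (H : SimpleGraph U) : PG V U → Prop
  | .clique p c => ∀ u, H.Adj p u ↔ ∃ x, u = ι x ∧ c x = 1
  | .pivot p q a b => (∀ u, H.Adj p u ↔ (u = q ∨ ∃ x, u = ι x ∧ b x = 1)) ∧
      (∀ u, H.Adj q u ↔ (u = p ∨ ∃ x, u = ι x ∧ a x = 1))

def LocEquivOn (S : Set U) (G G' : SimpleGraph U) : Prop :=
  Relation.ReflTransGen (fun A B => ∃ v ∈ S, B = localComp A v) G G'

lemma LocEquivOn.mono {S S' : Set U} (h : S ⊆ S') {G G' : SimpleGraph U}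
    (he : LocEquivOn S G G') : LocEquivOn S' G G' :=
  Relation.ReflTransGen.mono (fun A B (hh : ∃ v ∈ S, B = localComp A v) => by obtain ⟨v, hv, he⟩ := hh; exact ⟨v, h hv, he⟩) _ _ he

open Classical in
lemma list_step (ι : V → U) (hinj : Function.Injective ι) :
    ∀ (P : List (PG V U)) (H : SimpleGraph U),
    (∀ g ∈ P, ∀ u ∈ g.verts, u ∉ Set.range ι) →
    (∀ g ∈ P, g.okverts) →
    List.Pairwise (fun g g' => ∀ u ∈ g.verts, u ∉ g'.verts) P →
    (∀ g ∈ P, spec ι H g) →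
    ∃ H', LocEquivOn {u | ∃ g ∈ P, u ∈ g.verts} H H' ∧
      (∀ x y : V, x ≠ y →
        (if H'.Adj (ι x) (ι y) then (1 : ZMod 2) else 0) =
          (if H.Adj (ι x) (ι y) then (1 : ZMod 2) else 0) +
            (P.map (fun g => g.tog x y)).sum) ∧
      (∀ u w, u ∉ Set.range ι → (∀ g ∈ P, u ∉ g.verts) → (H'.Adj u w ↔ H.Adj u w)) := by
  intro P
  induction P with
  | nil =>
    intro H _ _ _ _
    exact ⟨H, Relation.ReflTransGen.refl, by simp, fun u w _ _ => Iff.rfl⟩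
  | cons g P IH =>
    intro H hrange hok hpair hspec
    -- process the head gadget first
    have hgr : ∀ u ∈ g.verts, u ∉ Set.range ι := hrange g (List.mem_cons_self)
    have hspecg := hspec g (List.mem_cons_self)
    have hpair' := (List.pairwise_cons.mp hpair).2
    have hdisj : ∀ g' ∈ P, ∀ u ∈ g.verts, u ∉ g'.verts :=
      fun g' hg' u hu => (List.pairwise_cons.mp hpair).1 g' hg' u hu
    -- single-gadget processing, uniform interface
    obtain ⟨H₁, hstep, hmain, hframe⟩ :
        ∃ H₁ : SimpleGraph U, LocEquivOn {u | u ∈ g.verts} H H₁ ∧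
          (∀ x y : V, x ≠ y →
            (if H₁.Adj (ι x) (ι y) then (1 : ZMod 2) else 0) =
              (if H.Adj (ι x) (ι y) then (1 : ZMod 2) else 0) + g.tog x y) ∧
          (∀ u w, u ∉ Set.range ι → u ∉ g.verts → (H₁.Adj u w ↔ H.Adj u w)) := by
      have hokg := hok g (List.mem_cons_self)
      cases g with
      | clique p c =>
        have hs : ∀ u, H.Adj p u ↔ ∃ x, u = ι x ∧ c x = 1 := hspecg
        obtain ⟨h1, h2⟩ := clique_step H ι hinj p c hs
        refine ⟨localComp H p, ?_, h1, ?_⟩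
        · exact Relation.ReflTransGen.single ⟨p, by simp [PG.verts], rfl⟩
        · intro u w hu _
          apply h2
          rw [hs]
          rintro ⟨x, rfl, _⟩
          exact hu ⟨x, rfl⟩
      | pivot p q a b =>
        have hpq : p ≠ q := hokg
        have hpr : p ∉ Set.range ι := hgr p (by simp [PG.verts])
        have hqr : q ∉ Set.range ι := hgr q (by simp [PG.verts])
        obtain ⟨hs1, hs2⟩ := hspecg
        obtain ⟨h1, h2⟩ := pivot_step H ι hinj p q a b hpq hpr hqr hs1 hs2
        refine ⟨_, ?_, h1, ?_⟩
        · refine Relation.ReflTransGen.head ⟨p, by simp [PG.verts], rfl⟩ ?_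
          refine Relation.ReflTransGen.head ⟨q, by simp [PG.verts], rfl⟩ ?_
          exact Relation.ReflTransGen.single ⟨p, by simp [PG.verts], rfl⟩
        · intro u w hu hugv
          have hup : u ≠ p := by intro h; exact hugv (by simp [PG.verts, h])
          have huq : u ≠ q := by intro h; exact hugv (by simp [PG.verts, h])
          apply h2
          · rw [hs1]
            rintro (h | ⟨x, rfl, _⟩)
            · exact huq h
            · exact hu ⟨x, rfl⟩
          · rw [hs2]
            rintro (h | ⟨x, rfl, _⟩)
            · exact hup h
            · exact hu ⟨x, rfl⟩
          · exact hup
          · exact huq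
    -- specs of the remaining gadgets survive
    have hspecP : ∀ g' ∈ P, spec ι H₁ g' := by
      intro g' hg'
      have hgvr : ∀ v ∈ g'.verts, v ∉ Set.range ι :=
        fun v hv => hrange g' (List.mem_cons_of_mem g hg') v hv
      have hfr : ∀ v ∈ g'.verts, ∀ w, H₁.Adj v w ↔ H.Adj v w := by
        intro v hv w
        exact hframe v w (hgvr v hv) (fun hvg => hdisj g' hg' v hvg hv)
      have hs := hspec g' (List.mem_cons_of_mem g hg')
      cases g' with
      | clique p c =>
        intro u
        rw [hfr p (by simp [PG.verts]) u]
        exact hs u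
      | pivot p q a b =>
        exact ⟨fun u => by rw [hfr p (by simp [PG.verts]) u]; exact hs.1 u,
               fun u => by rw [hfr q (by simp [PG.verts]) u]; exact hs.2 u⟩
    obtain ⟨H', hH'1, hH'2, hH'3⟩ := IH H₁
      (fun g' hg' => hrange g' (List.mem_cons_of_mem g hg'))
      (fun g' hg' => hok g' (List.mem_cons_of_mem g hg')) hpair' hspecP
    refine ⟨H', ?_, ?_, ?_⟩
    · refine Relation.ReflTransGen.trans
        (hstep.mono ?_) (hH'1.mono ?_)
      · intro u hu; exact ⟨g, List.mem_cons_self, hu⟩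
      · rintro u ⟨g', hg', hu⟩; exact ⟨g', List.mem_cons_of_mem g hg', hu⟩
    · intro x y hxy
      rw [hH'2 x y hxy, hmain x y hxy]
      simp [add_assoc]
    · intro u w hu hv
      rw [hH'3 u w hu (fun g' hg' => hv g' (List.mem_cons_of_mem g hg')),
        hframe u w hu (hv g (List.mem_cons_self))]

end


section
variable {V U : Type}

def gAdj (ι : V → U) : PG V U → U → U → Prop
  | .clique p c, u, w => (u = p ∧ ∃ x, w = ι x ∧ c x = 1) ∨ (w = p ∧ ∃ x, u = ι x ∧ c x = 1)
  | .pivot p q a b, u, w => (u = p ∧ w = q) ∨ (u = q ∧ w = p) ∨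
      (u = p ∧ ∃ x, w = ι x ∧ b x = 1) ∨ (w = p ∧ ∃ x, u = ι x ∧ b x = 1) ∨
      (u = q ∧ ∃ x, w = ι x ∧ a x = 1) ∨ (w = q ∧ ∃ x, u = ι x ∧ a x = 1)

lemma gAdj_symm (ι : V → U) (g : PG V U) (u w : U) (h : gAdj ι g u w) : gAdj ι g w u := by
  cases g with
  | clique p c =>
    unfold gAdj at h ⊢
    rcases h with h | h
    · exact Or.inr h
    · exact Or.inl h
  | pivot p q a b =>
    unfold gAdj at h ⊢
    rcases h with h|h|h|h|h|h
    · exact Or.inr (Or.inl ⟨h.2, h.1⟩)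
    · exact Or.inl ⟨h.2, h.1⟩
    · exact Or.inr (Or.inr (Or.inr (Or.inl h)))
    · exact Or.inr (Or.inr (Or.inl h))
    · exact Or.inr (Or.inr (Or.inr (Or.inr (Or.inr h))))
    · exact Or.inr (Or.inr (Or.inr (Or.inr (Or.inl h))))

def mkGraph (G' : SimpleGraph V) (ι : V → U) (P : List (PG V U)) : SimpleGraph U where
  Adj u w := u ≠ w ∧ ((∃ x y, u = ι x ∧ w = ι y ∧ G'.Adj x y) ∨ ∃ g ∈ P, gAdj ι g u w)
  symm := by
    constructor
    rintro u w ⟨hne, h | ⟨g, hg, h⟩⟩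
    · obtain ⟨x, y, hx, hy, h⟩ := h
      exact ⟨hne.symm, Or.inl ⟨y, x, hy, hx, h.symm⟩⟩
    · exact ⟨hne.symm, Or.inr ⟨g, hg, gAdj_symm ι g u w h⟩⟩
  loopless := ⟨fun u h => h.1 rfl⟩

lemma notgAdj_faraway (ι : V → U) (g : PG V U) (u w : U)
    (hu1 : u ∉ Set.range ι) (hu2 : u ∉ g.verts) : ¬ gAdj ι g u w := by
  intro h
  cases g with
  | clique p c =>
    unfold gAdj at h
    simp only [PG.verts, List.mem_singleton] at hu2
    rcases h with ⟨h1, _⟩ | ⟨_, x, h2, _⟩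
    · exact hu2 h1
    · exact hu1 ⟨x, h2.symm⟩
  | pivot p q a b =>
    unfold gAdj at h
    simp only [PG.verts, List.mem_cons, List.mem_singleton] at hu2
    push_neg at hu2
    rcases h with ⟨h1, _⟩|⟨h1, _⟩|⟨h1, _⟩|⟨_, x, h2, _⟩|⟨h1, _⟩|⟨_, x, h2, _⟩
    · exact hu2.1 h1
    · exact hu2.2.1 h1
    · exact hu2.1 h1
    · exact hu1 ⟨x, h2.symm⟩
    · exact hu2.2.1 h1
    · exact hu1 ⟨x, h2.symm⟩

lemma gAdj_mem (ι : V → U) (g : PG V U) (u w : U) (h : gAdj ι g u w) :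
    u ∈ g.verts ∨ w ∈ g.verts := by
  cases g with
  | clique p c =>
    rcases h with ⟨h1, _⟩ | ⟨h1, _⟩
    · exact Or.inl (by simp [PG.verts, h1])
    · exact Or.inr (by simp [PG.verts, h1])
  | pivot p q a b =>
    rcases h with ⟨h1, _⟩|⟨h1, _⟩|⟨h1, _⟩|⟨h1, _⟩|⟨h1, _⟩|⟨h1, _⟩
    · exact Or.inl (by simp [PG.verts, h1])
    · exact Or.inl (by simp [PG.verts, h1])
    · exact Or.inl (by simp [PG.verts, h1])
    · exact Or.inr (by simp [PG.verts, h1])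
    · exact Or.inl (by simp [PG.verts, h1])
    · exact Or.inr (by simp [PG.verts, h1])

lemma mkGraph_inl (G' : SimpleGraph V) (ι : V → U) (hinj : Function.Injective ι)
    (P : List (PG V U)) (hrange : ∀ g ∈ P, ∀ u ∈ g.verts, u ∉ Set.range ι) :
    ∀ x y : V, (mkGraph G' ι P).Adj (ι x) (ι y) ↔ G'.Adj x y := by
  intro x y
  constructor
  · rintro ⟨hne, h | ⟨g, hg, h⟩⟩
    · obtain ⟨x', y', hx, hy, h⟩ := h
      rw [hinj hx, hinj hy]
      exact h
    · rcases gAdj_mem ι g _ _ h with hv | hv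
      · exact absurd ⟨x, rfl⟩ (hrange g hg _ hv)
      · exact absurd ⟨y, rfl⟩ (hrange g hg _ hv)
  · intro h
    exact ⟨fun he => (G'.ne_of_adj h) (hinj he), Or.inl ⟨x, y, rfl, rfl, h⟩⟩

lemma mk_adj_vert (G' : SimpleGraph V) (ι : V → U) (P : List (PG V U))
    (hrange : ∀ g ∈ P, ∀ u ∈ g.verts, u ∉ Set.range ι)
    (hpair : List.Pairwise (fun g g' => ∀ u ∈ g.verts, u ∉ g'.verts) P)
    (g : PG V U) (hg : g ∈ P) (v : U) (hv : v ∈ g.verts) (u : U) :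
    (mkGraph G' ι P).Adj v u ↔ (v ≠ u ∧ gAdj ι g v u) := by
  constructor
  · rintro ⟨hne, h | ⟨g', hg', h⟩⟩
    · obtain ⟨x, _, hx, _, _⟩ := h
      exact absurd ⟨x, hx.symm⟩ (hrange g hg v hv)
    · refine ⟨hne, ?_⟩
      by_cases hgg : g' = g
      · rwa [hgg] at h
      · have hsymm : Symmetric (fun g g' : PG V U => ∀ u ∈ g.verts, u ∉ g'.verts) :=
          fun g1 g2 h12 u hu hv => h12 u hv hu
        have hdis := @List.Pairwise.forall _ _ _ ⟨hsymm⟩ hpair _ hg _ hg' (fun he => hgg he.symm)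
        exact absurd h (notgAdj_faraway ι g' v u (hrange g hg v hv) (hdis v hv))
  · rintro ⟨hne, h⟩
    exact ⟨hne, Or.inr ⟨g, hg, h⟩⟩

lemma spec_mk (G' : SimpleGraph V) (ι : V → U)
    (P : List (PG V U))
    (hrange : ∀ g ∈ P, ∀ u ∈ g.verts, u ∉ Set.range ι)
    (hok : ∀ g ∈ P, g.okverts)
    (hpair : List.Pairwise (fun g g' => ∀ u ∈ g.verts, u ∉ g'.verts) P) :
    ∀ g ∈ P, spec ι (mkGraph G' ι P) g := by
  intro g hg
  have har := hrange g hg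
  cases g with
  | clique p c =>
    intro u
    rw [mk_adj_vert G' ι P hrange hpair _ hg p (by simp [PG.verts]) u]
    have hpr : p ∉ Set.range ι := har p (by simp [PG.verts])
    unfold gAdj
    constructor
    · rintro ⟨hne, ⟨_, hx⟩ | ⟨_, x, hx, _⟩⟩
      · exact hx
      · exact absurd ⟨x, hx.symm⟩ hpr
    · rintro ⟨x, rfl, hx⟩
      exact ⟨fun he => hpr ⟨x, he.symm⟩, Or.inl ⟨rfl, x, rfl, hx⟩⟩
  | pivot p q a b =>
    have hpq : p ≠ q := hok _ hg
    have hpr : p ∉ Set.range ι := har p (by simp [PG.verts])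
    have hqr : q ∉ Set.range ι := har q (by simp [PG.verts])
    constructor
    · intro u
      rw [mk_adj_vert G' ι P hrange hpair _ hg p (by simp [PG.verts]) u]
      unfold gAdj
      constructor
      · rintro ⟨hne, ⟨_, h⟩|⟨h, _⟩|⟨_, h⟩|⟨_, x, hx, _⟩|⟨h, _⟩|⟨_, x, hx, _⟩⟩
        · exact Or.inl h
        · exact absurd h hpq
        · exact Or.inr h
        · exact absurd ⟨x, hx.symm⟩ hpr
        · exact absurd h hpq
        · exact absurd ⟨x, hx.symm⟩ hpr
      · rintro (rfl | ⟨x, rfl, hx⟩)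
        · exact ⟨hpq, Or.inl ⟨rfl, rfl⟩⟩
        · exact ⟨fun he => hpr ⟨x, he.symm⟩, Or.inr (Or.inr (Or.inl ⟨rfl, x, rfl, hx⟩))⟩
    · intro u
      rw [mk_adj_vert G' ι P hrange hpair _ hg q (by simp [PG.verts]) u]
      unfold gAdj
      constructor
      · rintro ⟨hne, ⟨h, _⟩|⟨_, h⟩|⟨h, _⟩|⟨_, x, hx, _⟩|⟨_, h⟩|⟨_, x, hx, _⟩⟩
        · exact absurd h.symm hpq
        · exact Or.inl h
        · exact absurd h.symm hpq
        · exact absurd ⟨x, hx.symm⟩ hqr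
        · exact Or.inr h
        · exact absurd ⟨x, hx.symm⟩ hqr
      · rintro (rfl | ⟨x, rfl, hx⟩)
        · exact ⟨hpq.symm, Or.inr (Or.inl ⟨rfl, rfl⟩)⟩
        · exact ⟨fun he => hqr ⟨x, he.symm⟩, Or.inr (Or.inr (Or.inr (Or.inr (Or.inl ⟨rfl, x, rfl, hx⟩))))⟩

end


section
variable {V : Type}

def place : List (Term V) → ℕ → List (PG V (V ⊕ ℕ))
  | [], _ => []
  | .clique c :: L, n => .clique (Sum.inr n) c :: place L (n + 1)
  | .pivot a b :: L, n => .pivot (Sum.inr n) (Sum.inr (n + 1)) a b :: place L (n + 2)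

lemma place_verts : ∀ (L : List (Term V)) (n : ℕ), ∀ g ∈ place L n, ∀ u ∈ PG.verts g,
    ∃ k, u = Sum.inr k ∧ n ≤ k ∧ k < n + (L.map Term.cost).sum := by
  intro L
  induction L with
  | nil => intro n g hg; cases hg
  | cons t L IH =>
    intro n g hg u hu
    cases t with
    | clique c =>
      rw [place, List.mem_cons] at hg
      rcases hg with rfl | hg
      · simp only [PG.verts, List.mem_singleton] at hu
        exact ⟨n, hu, le_refl n, by simp [Term.cost] <;> omega⟩
      · obtain ⟨k, hk, h1, h2⟩ := IH (n + 1) g hg u hu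
        exact ⟨k, hk, by omega, by simp [Term.cost] at h2 ⊢; omega⟩
    | pivot a b =>
      rw [place, List.mem_cons] at hg
      rcases hg with rfl | hg
      · simp only [PG.verts, List.mem_cons, List.not_mem_nil, or_false] at hu
        rcases hu with rfl | rfl
        · exact ⟨n, rfl, le_refl n, by simp [Term.cost] <;> omega⟩
        · exact ⟨n + 1, rfl, by omega, by simp [Term.cost] <;> omega⟩
      · obtain ⟨k, hk, h1, h2⟩ := IH (n + 2) g hg u hu
        exact ⟨k, hk, by omega, by simp [Term.cost] at h2 ⊢; omega⟩

lemma place_ok : ∀ (L : List (Term V)) (n : ℕ), ∀ g ∈ place L n, g.okverts := by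
  intro L
  induction L with
  | nil => intro n g hg; cases hg
  | cons t L IH =>
    intro n g hg
    cases t with
    | clique c =>
      rw [place, List.mem_cons] at hg
      rcases hg with rfl | hg
      · trivial
      · exact IH (n + 1) g hg
    | pivot a b =>
      rw [place, List.mem_cons] at hg
      rcases hg with rfl | hg
      · simp only [PG.okverts]
        intro h
        exact absurd (Sum.inr_injective h) (by omega)
      · exact IH (n + 2) g hg

lemma place_pairwise : ∀ (L : List (Term V)) (n : ℕ),
    List.Pairwise (fun g g' => ∀ u ∈ PG.verts g, u ∉ PG.verts g') (place L n) := by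
  intro L
  induction L with
  | nil => intro n; exact List.Pairwise.nil
  | cons t L IH =>
    intro n
    cases t with
    | clique c =>
      rw [place]
      refine List.pairwise_cons.mpr ⟨?_, IH (n + 1)⟩
      intro g' hg' u hu hu'
      obtain ⟨k, hk, h1, _⟩ := place_verts L (n + 1) g' hg' u hu'
      simp only [PG.verts, List.mem_cons, List.not_mem_nil, or_false] at hu
      rw [hu] at hk
      have := Sum.inr_injective hk
      omega
    | pivot a b =>
      rw [place]
      refine List.pairwise_cons.mpr ⟨?_, IH (n + 2)⟩
      intro g' hg' u hu hu'
      obtain ⟨k, hk, h1, _⟩ := place_verts L (n + 2) g' hg' u hu'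
      simp only [PG.verts, List.mem_cons, List.not_mem_nil, or_false] at hu
      rcases hu with rfl | rfl <;> (have := Sum.inr_injective hk; omega)

lemma place_tog : ∀ (L : List (Term V)) (n : ℕ) (x y : V),
    ((place L n).map (fun g => PG.tog g x y)).sum = ((L.map Term.mat).sum) x y := by
  intro L
  induction L with
  | nil => intro n x y; simp [place]
  | cons t L IH =>
    intro n x y
    cases t with
    | clique c =>
      simp only [place, List.map_cons, List.sum_cons, IH (n + 1) x y]
      simp [PG.tog, Term.mat, Matrix.add_apply, Matrix.vecMulVec_apply]
    | pivot a b =>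
      simp only [place, List.map_cons, List.sum_cons, IH (n + 2) x y]
      simp [PG.tog, Term.mat, Matrix.add_apply, Matrix.vecMulVec_apply]
      ring

end


section
variable {V : Type}

lemma comap_localComp {α β : Type} (f : α → β) (hf : Function.Injective f)
    (H : SimpleGraph β) (v : α) :
    SimpleGraph.comap f (localComp H (f v)) = localComp (SimpleGraph.comap f H) v := by
  ext x y
  simp only [SimpleGraph.comap_adj, localComp_adj, ne_eq, hf.ne_iff]

lemma comap_locEquiv {α β : Type} (f : α → β) (hf : Function.Injective f)
    (S : Set β) (hS : ∀ v ∈ S, ∃ v', f v' = v) (A B : SimpleGraph β)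
    (h : LocEquivOn S A B) :
    LocEquiv (SimpleGraph.comap f A) (SimpleGraph.comap f B) := by
  induction h with
  | refl => exact Relation.ReflTransGen.refl
  | tail hAB hstep ih =>
    obtain ⟨v, hv, rfl⟩ := hstep
    obtain ⟨v', rfl⟩ := hS v hv
    exact ih.tail ⟨v', (comap_localComp f hf _ v')⟩

lemma ind_inj {A B : Prop} [Decidable A] [Decidable B]
    (h : (if A then (1 : ZMod 2) else 0) = (if B then (1 : ZMod 2) else 0)) : A ↔ B := by
  by_cases hA : A <;> by_cases hB : B <;> simp [hA, hB] at h ⊢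

end

/-- Every rank-`t` perturbation of a graph `G` is a `t`-perturbation
of `G`. -/
theorem rankPerturbation_isPerturbation {V : Type} [Fintype V] (t : ℕ)
    (G G' : SimpleGraph V) (h : IsRankPerturbation t G' G) :
    IsPerturbation t G' G := by
  classical
  obtain ⟨M, hrk, hM⟩ := h
  have key : ∀ a m : ZMod 2, a + (a + m) = m := by decide
  have hGsym : ∀ (K : SimpleGraph V) (x y : V), adjMat K x y = adjMat K y x := by
    intro K x y
    by_cases hA : K.Adj x y
    · simp [adjMat, hA, hA.symm]
    · have hA' : ¬ K.Adj y x := fun hc => hA hc.symm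
      simp [adjMat, hA, hA']
  have hsymM : ∀ x y, M x y = M y x := by
    intro x y
    by_cases hxy : x = y
    · rw [hxy]
    · have e1 : M x y = adjMat G x y + adjMat G' x y := by
        rw [hM x y hxy, key]
      have e2 : M y x = adjMat G y x + adjMat G' y x := by
        rw [hM y x (Ne.symm hxy), key]
      rw [e1, e2, hGsym G x y, hGsym G' x y]
  obtain ⟨L, hcost, hsum⟩ := decomp_exists t M hsymM hrk
  have hinj : Function.Injective (Sum.inl : V → V ⊕ ℕ) := Sum.inl_injective
  have hrangeP : ∀ g ∈ place L 0, ∀ u ∈ PG.verts g, u ∉ Set.range (Sum.inl : V → V ⊕ ℕ) := by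
    intro g hg u hu hmem
    obtain ⟨k, rfl, _⟩ := place_verts L 0 g hg u hu
    obtain ⟨x, hx⟩ := hmem
    exact Sum.inl_ne_inr hx
  obtain ⟨H', hLoc, hmain, _⟩ := list_step Sum.inl hinj (place L 0) (mkGraph G Sum.inl (place L 0))
    hrangeP (place_ok L 0) (place_pairwise L 0)
    (spec_mk G Sum.inl (place L 0) hrangeP (place_ok L 0) (place_pairwise L 0))
  set j : V ⊕ Fin t → V ⊕ ℕ := Sum.map id Fin.val with hj
  have hjinj : Function.Injective j := by
    rintro (x | k) (y | m) hxy
    · simp only [hj, Sum.map_inl, Sum.inl.injEq, id] at hxy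
      rw [hxy]
    · simp [hj] at hxy
    · simp [hj] at hxy
    · simp only [hj, Sum.map_inr, Sum.inr.injEq] at hxy
      rw [Sum.inr.injEq]
      exact Fin.val_injective hxy
  have hGbigInl := mkGraph_inl G (Sum.inl : V → V ⊕ ℕ) hinj (place L 0) hrangeP
  refine ⟨SimpleGraph.comap j (mkGraph G Sum.inl (place L 0)),
    ⟨SimpleGraph.comap j H', ?_, ?_⟩,
    ⟨SimpleGraph.comap j (mkGraph G Sum.inl (place L 0)), Relation.ReflTransGen.refl, ?_⟩⟩
  · -- local equivalence
    refine comap_locEquiv j hjinj _ ?_ _ _ hLoc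
    rintro v ⟨g, hg, hv⟩
    obtain ⟨k, rfl, _, hk2⟩ := place_verts L 0 g hg v hv
    have hkt : k < t := by omega
    exact ⟨Sum.inr ⟨k, hkt⟩, rfl⟩
  · -- G' is induced on the image
    intro x y
    show G'.Adj x y ↔ H'.Adj (Sum.inl x) (Sum.inl y)
    by_cases hxy : x = y
    · subst hxy
      simp [G'.loopless.irrefl x, H'.loopless.irrefl (Sum.inl x)]
    · have := hmain x y hxy
      rw [place_tog L 0 x y, hsum] at this
      have hbig : (if (mkGraph G Sum.inl (place L 0)).Adj (Sum.inl x) (Sum.inl y) then (1 : ZMod 2) else 0)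
          = adjMat G x y := by
        by_cases hA : G.Adj x y <;> simp [adjMat, (hGbigInl x y), hA]
      rw [hbig, ← hM x y hxy] at this
      have : (if G'.Adj x y then (1 : ZMod 2) else 0) =
          (if H'.Adj (Sum.inl x) (Sum.inl y) then (1 : ZMod 2) else 0) := by
        rw [this]; simp [adjMat]
      exact ind_inj this
  · -- G is induced on the image
    intro x y
    show G.Adj x y ↔ (mkGraph G Sum.inl (place L 0)).Adj (Sum.inl x) (Sum.inl y)
    exact (hGbigInl x y).symm

end EP
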